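/- Let 1 < γ ≤ 2 and let u, v ∈ ℝ satisfy |u| ≤ v. Then (1+v²)^{γ/2} − (1+u²)^{γ/2} ≥ (γ/2)(v−u) ( v(1+v²)^{γ/2−1} + u(1+u²)^{γ/2−1} ). Equivalently, with f(s) = (1+s²)^{γ/2}, the difference quotient (f(v)−f(u))/(v−u) is at least the average (f'(u)+f'(v))/2 of the endpoint derivatives whenever −v ≤ u < v. -/

import Mathlib

open Real

section Aux

variable (γ : ℝ)

private noncomputable def wphi (s : ℝ) : ℝ := γ * s * (1 + s ^ 2) ^ (γ / 2 - 1)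

private noncomputable def wpsi (s : ℝ) : ℝ :=
  γ * (γ - 1) * (1 + s ^ 2) ^ (γ / 2 - 1) + γ * (2 - γ) * (1 + s ^ 2) ^ (γ / 2 - 2)

private lemma one_add_sq_pos (s : ℝ) : (0:ℝ) < 1 + s ^ 2 := by positivity

private lemma key_rpow (s : ℝ) :
    (1 + s ^ 2) ^ (γ / 2 - 1) = (1 + s ^ 2) ^ (γ / 2 - 2) * (1 + s ^ 2) := by
  rw [show γ / 2 - 1 = γ / 2 - 2 + 1 from by ring,
    Real.rpow_add_one (ne_of_gt (one_add_sq_pos s))]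

private lemma hasDerivAt_base (s : ℝ) : HasDerivAt (fun t : ℝ => 1 + t ^ 2) (2 * s) s := by
  simpa using ((hasDerivAt_pow 2 s).const_add 1)

private lemma hasDerivAt_w (p s : ℝ) :
    HasDerivAt (fun t : ℝ => (1 + t ^ 2) ^ p) (2 * s * p * (1 + s ^ 2) ^ (p - 1)) s := by
  have := (hasDerivAt_base s).rpow_const (p := p) (Or.inl (ne_of_gt (one_add_sq_pos s)))
  simpa [mul_assoc] using this

private lemma hasDerivAt_f (s : ℝ) :
    HasDerivAt (fun t : ℝ => (1 + t ^ 2) ^ (γ / 2)) (wphi γ s) s := by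
  have h := hasDerivAt_w (γ / 2) s
  convert h using 1
  unfold wphi
  ring_nf

private lemma hasDerivAt_phi (s : ℝ) : HasDerivAt (wphi γ) (wpsi γ s) s := by
  have h : HasDerivAt (wphi γ) _ s := ((hasDerivAt_id s).const_mul γ).mul (hasDerivAt_w (γ / 2 - 1) s)
  convert h using 1
  simp only [id_eq]
  rw [show γ / 2 - 1 - 1 = γ / 2 - 2 from by ring]
  unfold wpsi
  rw [key_rpow]
  ring

private lemma psi_antitone {x y : ℝ} (hγ1 : 1 < γ) (hγ2 : γ ≤ 2) (hx : 0 ≤ x) (hxy : x ≤ y) :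
    wpsi γ y ≤ wpsi γ x := by
  have hbase : (0:ℝ) < 1 + x ^ 2 := one_add_sq_pos x
  have hb2 : 1 + x ^ 2 ≤ 1 + y ^ 2 := by nlinarith
  have h1 : (1 + y ^ 2) ^ (γ / 2 - 1) ≤ (1 + x ^ 2) ^ (γ / 2 - 1) :=
    Real.rpow_le_rpow_of_nonpos hbase hb2 (by linarith)
  have h2 : (1 + y ^ 2) ^ (γ / 2 - 2) ≤ (1 + x ^ 2) ^ (γ / 2 - 2) :=
    Real.rpow_le_rpow_of_nonpos hbase hb2 (by linarith)
  have hc1 : 0 ≤ γ * (γ - 1) := by nlinarith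
  have hc2 : 0 ≤ γ * (2 - γ) := by nlinarith
  unfold wpsi
  have := mul_le_mul_of_nonneg_left h1 hc1
  have := mul_le_mul_of_nonneg_left h2 hc2
  linarith

private lemma tangent {b t : ℝ} (hγ1 : 1 < γ) (hγ2 : γ ≤ 2) (hb : 0 ≤ b) (hbt : b ≤ t) :
    (t - b) * wpsi γ t ≤ wphi γ t - wphi γ b := by
  rcases eq_or_lt_of_le hbt with rfl | hlt
  · simp
  · obtain ⟨c, hc, hceq⟩ :=
      exists_hasDerivAt_eq_slope (wphi γ) (wpsi γ) hlt
        (fun x _ => (hasDerivAt_phi γ x).continuousAt.continuousWithinAt)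
        (fun x _ => hasDerivAt_phi γ x)
    have hψ : wpsi γ t ≤ wpsi γ c :=
      psi_antitone γ hγ1 hγ2 (le_trans hb hc.1.le) hc.2.le
    have htb : (0:ℝ) < t - b := by linarith
    rw [eq_div_iff (ne_of_gt htb)] at hceq
    have h1 : (t - b) * wpsi γ t ≤ (t - b) * wpsi γ c :=
      mul_le_mul_of_nonneg_left hψ htb.le
    linarith [hceq, h1]

private lemma core (hγ1 : 1 < γ) (hγ2 : γ ≤ 2) {b v : ℝ} (hb : 0 ≤ b) (hbv : b ≤ v) :
    γ / 2 * (v - b) * (v * (1 + v ^ 2) ^ (γ / 2 - 1) + b * (1 + b ^ 2) ^ (γ / 2 - 1))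
      ≤ (1 + v ^ 2) ^ (γ / 2) - (1 + b ^ 2) ^ (γ / 2) := by
  have hderiv : ∀ t : ℝ, HasDerivAt
      (fun t : ℝ => (1 + t ^ 2) ^ (γ / 2)
        - γ / 2 * ((t - b) * (t * (1 + t ^ 2) ^ (γ / 2 - 1) + b * (1 + b ^ 2) ^ (γ / 2 - 1))))
      ((wphi γ t - wphi γ b - (t - b) * wpsi γ t) / 2) t := by
    intro t
    have h : HasDerivAt (fun t : ℝ => (1 + t ^ 2) ^ (γ / 2)
        - γ / 2 * ((t - b) * (t * (1 + t ^ 2) ^ (γ / 2 - 1) + b * (1 + b ^ 2) ^ (γ / 2 - 1)))) _ t :=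
      (hasDerivAt_f γ t).sub
      ((((hasDerivAt_id t).sub_const b).mul
        (((hasDerivAt_id t).fun_mul (hasDerivAt_w (γ / 2 - 1) t)).add_const
          (b * (1 + b ^ 2) ^ (γ / 2 - 1)))).const_mul (γ / 2))
    convert h using 1
    simp only [id_eq]
    rw [show γ / 2 - 1 - 1 = γ / 2 - 2 from by ring]
    unfold wphi wpsi
    rw [key_rpow γ t]
    ring
  have hmono : MonotoneOn
      (fun t : ℝ => (1 + t ^ 2) ^ (γ / 2)
        - γ / 2 * ((t - b) * (t * (1 + t ^ 2) ^ (γ / 2 - 1) + b * (1 + b ^ 2) ^ (γ / 2 - 1))))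
      (Set.Icc b v) := by
    apply monotoneOn_of_deriv_nonneg (convex_Icc b v)
    · exact fun x _ => (hderiv x).continuousAt.continuousWithinAt
    · intro x _
      exact (hderiv x).differentiableAt.differentiableWithinAt
    · intro x hx
      rw [interior_Icc] at hx
      rw [(hderiv x).deriv]
      have := tangent γ hγ1 hγ2 hb hx.1.le
      linarith
  have key := hmono (Set.left_mem_Icc.2 hbv) (Set.right_mem_Icc.2 hbv) hbv
  simp only [sub_self, zero_mul, mul_zero, sub_zero] at key
  linarith [key]

end Aux

/-- For `1 < γ ≤ 2` and `|u| ≤ v`, with `f(s) = (1+s²)^{γ/2}` one has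
`f(v) − f(u) ≥ (γ/2)(v−u)(v(1+v²)^{γ/2−1} + u(1+u²)^{γ/2−1})`, i.e. the difference
quotient of `f` dominates the average of the endpoint derivatives. -/
theorem weight_difference_quotient_bound (γ u v : ℝ) (hγ1 : 1 < γ) (hγ2 : γ ≤ 2)
    (huv : |u| ≤ v) :
    γ / 2 * (v - u) * (v * (1 + v ^ 2) ^ (γ / 2 - 1) + u * (1 + u ^ 2) ^ (γ / 2 - 1))
      ≤ (1 + v ^ 2) ^ (γ / 2) - (1 + u ^ 2) ^ (γ / 2) := by
  have hv : 0 ≤ v := le_trans (abs_nonneg u) huv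
  rcases le_or_gt 0 u with hu | hu
  · exact core γ hγ1 hγ2 hu (le_trans (le_abs_self u) huv)
  · set b : ℝ := -u with hbdef
    have hb : 0 ≤ b := by rw [hbdef]; linarith
    have hbv : b ≤ v := by rw [hbdef]; exact le_trans (neg_le_abs u) huv
    have hub : u ^ 2 = b ^ 2 := by rw [hbdef]; ring
    have hu' : u = -b := by rw [hbdef]; ring
    have H := core γ hγ1 hγ2 hb hbv
    have hW : (1 + v ^ 2) ^ (γ / 2 - 1) ≤ (1 + b ^ 2) ^ (γ / 2 - 1) :=
      Real.rpow_le_rpow_of_nonpos (one_add_sq_pos b) (by nlinarith) (by linarith)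
    have hγpos : (0:ℝ) < γ := by linarith
    rw [hub, hu']
    linarith [H, mul_nonneg hγpos.le (mul_nonneg (mul_nonneg hb hv) (sub_nonneg.2 hW))]
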